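/- Let α > 0 and let X be a Leray solution of the unforced inviscid DN model on [0, T]. If for every t ∈ [0, T] one has lim_{N→∞} ∫₀ᵗ 2^{αN} X_N(s)² X_{N+1}(s) ds = 0, then the energy is conserved: Σ_{n≥1} X_n(t)² = Σ_{n≥1} X_n(0)² for all t ∈ [0, T]. -/

import Mathlib

open Set Filter

namespace Stmt14

/-- Let `X` be a Leray solution of the unforced inviscid DN model
(with `c_n = 2^(αn)`, convention `X_0 ≡ 0`) on `[0, T]`. If for every `t ∈ [0, T]` the
flux `∫₀ᵗ 2^(αN) X_N(s)² X_{N+1}(s) ds` tends to `0` as `N → ∞`, then the energy is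
conserved: `Σ_{n≥1} X_n(t)² = Σ_{n≥1} X_n(0)²` for all `t ∈ [0, T]`. -/
theorem energy_conservation (α T : ℝ) (hα : 0 < α) (hT : 0 ≤ T)
    (X : ℕ → ℝ → ℝ) (hX0 : ∀ t, X 0 t = 0)
    (hX : ∀ n : ℕ, 1 ≤ n → ∀ t ∈ Icc (0 : ℝ) T,
      HasDerivWithinAt (X n)
        ((2 : ℝ) ^ (α * ((n : ℝ) - 1)) * (X (n - 1) t) ^ 2
          - (2 : ℝ) ^ (α * (n : ℝ)) * X n t * X (n + 1) t) (Icc 0 T) t)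
    (hLeray : ∃ M : ℝ, ∀ t ∈ Icc (0 : ℝ) T,
      (Summable fun n => (X (n + 1) t) ^ 2) ∧ (∑' n, (X (n + 1) t) ^ 2) ≤ M)
    (hflux : ∀ t ∈ Icc (0 : ℝ) T,
      Tendsto (fun N : ℕ => ∫ s in (0 : ℝ)..t, (2 : ℝ) ^ (α * (N : ℝ)) * (X N s) ^ 2 * X (N + 1) s)
        atTop (nhds 0)) :
    ∀ t ∈ Icc (0 : ℝ) T, ∑' n, (X (n + 1) t) ^ 2 = ∑' n, (X (n + 1) 0) ^ 2 := by
  intro t ht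
  obtain ⟨M, hM⟩ := hLeray
  have h0mem : (0 : ℝ) ∈ Icc (0 : ℝ) T := ⟨le_refl 0, hT⟩
  -- the flux function
  set g : ℕ → ℝ → ℝ := fun N s => (2 : ℝ) ^ (α * (N : ℝ)) * (X N s) ^ 2 * X (N + 1) s with hg
  -- continuity of each X m on Icc 0 T
  have hc : ∀ m : ℕ, ContinuousOn (X m) (Icc (0 : ℝ) T) := by
    intro m
    rcases Nat.eq_zero_or_pos m with hm | hm
    · subst hm
      exact continuousOn_const.congr (fun x _ => hX0 x)
    · exact fun x hx => (hX m hm x hx).continuousWithinAt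
  -- partial energies
  set F : ℕ → ℝ → ℝ := fun N s => ∑ n ∈ Finset.range N, (X (n + 1) s) ^ 2 with hF
  -- derivative of partial energy: telescoping
  have hder : ∀ N : ℕ, ∀ x ∈ Icc (0 : ℝ) T,
      HasDerivWithinAt (F N) (-2 * g N x) (Icc 0 T) x := by
    intro N x hx
    have hsum : HasDerivWithinAt (F N)
        (∑ n ∈ Finset.range N, (2 * g n x - 2 * g (n + 1) x)) (Icc 0 T) x := by
      apply HasDerivWithinAt.fun_sum
      intro n _
      have h1 := (hX (n + 1) (Nat.le_add_left 1 n) x hx).pow 2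
      have e2 : (n + 1 : ℕ) - 1 = n := rfl
      have hval : 2 * g n x - 2 * g (n + 1) x
          = ((2 : ℕ) : ℝ) * X (n + 1) x ^ (2 - 1)
            * ((2 : ℝ) ^ (α * (((n + 1 : ℕ) : ℝ) - 1)) * X ((n + 1) - 1) x ^ 2
              - (2 : ℝ) ^ (α * ((n + 1 : ℕ) : ℝ)) * X (n + 1) x * X ((n + 1) + 1) x) := by
        simp only [hg, e2]
        push_cast
        rw [show α * ((n : ℝ) + 1 - 1) = α * (n : ℝ) by ring]
        ring
      rw [hval]
      exact h1
    have htel : (∑ n ∈ Finset.range N, (2 * g n x - 2 * g (n + 1) x)) = -2 * g N x := by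
      rw [Finset.sum_range_sub' (fun n => 2 * g n x)]
      simp [hg, hX0 x]
    rwa [htel] at hsum
  -- FTC: F N t - F N 0 = -2 * ∫ g N, for every N
  have key : ∀ N : ℕ, F N t - F N 0 = -2 * ∫ s in (0 : ℝ)..t, g N s := by
    intro N
    have hcontF : ContinuousOn (F N) (Icc (0 : ℝ) T) :=
      continuousOn_finset_sum _ fun n _ => (hc (n + 1)).pow 2
    have hcontg : ContinuousOn (fun s => -2 * g N s) (Icc (0 : ℝ) T) :=
      continuousOn_const.mul ((continuousOn_const.mul ((hc N).pow 2)).mul (hc (N + 1)))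
    have hsub : Icc (0 : ℝ) t ⊆ Icc (0 : ℝ) T := Icc_subset_Icc le_rfl ht.2
    have hint : IntervalIntegrable (fun s => -2 * g N s) MeasureTheory.volume 0 t :=
      (hcontg.mono (by rw [uIcc_of_le ht.1]; exact hsub)).intervalIntegrable
    have := intervalIntegral.integral_eq_sub_of_hasDeriv_right_of_le ht.1
      (hcontF.mono hsub)
      (fun x hx => by
        have hxT : x ∈ Icc (0 : ℝ) T := ⟨hx.1.le, hx.2.le.trans ht.2⟩
        have hmem : Icc (0 : ℝ) T ∈ nhdsWithin x (Ioi x) :=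
          Icc_mem_nhdsGT_of_mem ⟨hx.1.le, lt_of_lt_of_le hx.2 ht.2⟩
        exact (hder N x hxT).mono_of_mem_nhdsWithin hmem)
      hint
    rw [← this, intervalIntegral.integral_const_mul]
  -- limits of partial sums
  have hSt : Tendsto (fun N => F N t) atTop (nhds (∑' n, (X (n + 1) t) ^ 2)) :=
    ((hM t ht).1.hasSum).tendsto_sum_nat
  have hS0 : Tendsto (fun N => F N 0) atTop (nhds (∑' n, (X (n + 1) 0) ^ 2)) :=
    ((hM 0 h0mem).1.hasSum).tendsto_sum_nat
  have hlim1 : Tendsto (fun N => F N t - F N 0) atTop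
      (nhds ((∑' n, (X (n + 1) t) ^ 2) - ∑' n, (X (n + 1) 0) ^ 2)) := hSt.sub hS0
  have hlim2 : Tendsto (fun N => F N t - F N 0) atTop (nhds 0) := by
    have h := (hflux t ht).const_mul (-2 : ℝ)
    simp only [mul_zero] at h
    exact h.congr (fun N => (key N).symm)
  have := tendsto_nhds_unique hlim1 hlim2
  linarith [this]

end Stmt14
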